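/- arXiv:1709.04769 — 5 statements merged into one kernel-verified Lean document; each statement's English description precedes it below -/
import Mathlib

section
/- Let E and F be Banach spaces and let ε, σ_a, σ_s, R be real numbers with 0 < ε < 1, σ_a > 0, σ_s > 0, R > 0, and set β = σ_a + σ_s. Let K₁ : E → E, K₂ : F → E, K₃ : F → F, K₄ : E → F be continuous linear operators satisfying ‖K₁‖ ≤ 1 − ε, ‖K₂‖ ≤ ε σ_s / (4β), ‖K₃‖ ≤ (σ_s/β)(1 − exp(−βR)), and ‖K₄‖ ≤ 4(1 − ε)/ε. If ((1 − ε)/ε) · σ_s / (σ_a + σ_s · exp(−βR)) < 1, then for every f₁ ∈ E and f₂ ∈ F there exists a unique pair (q, G) ∈ E × F satisfying q = K₁ q + K₂ G + f₁ and G = K₄ q + K₃ G + f₂. -/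
/-- Quantitative form of the paper's Theorem 1: under the norm bounds of Corollary 1 for the
four radiative integral operators (with emissivity `ε`, absorption `σa`, scattering `σs`,
extinction `β = σa + σs`, enclosure diameter `R`), if
`((1 - ε)/ε) · σs / (σa + σs · exp(-βR)) < 1` then the radiative integral system
`q = K₁ q + K₂ G + f₁`, `G = K₄ q + K₃ G + f₂` has a unique solution. -/
theorem stmt_1 {E F : Type*} [NormedAddCommGroup E] [NormedSpace ℝ E] [CompleteSpace E]
    [NormedAddCommGroup F] [NormedSpace ℝ F] [CompleteSpace F]
    (ε σa σs R β : ℝ) (hε0 : 0 < ε) (hε1 : ε < 1) (hσa : 0 < σa) (hσs : 0 < σs)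
    (hR : 0 < R) (hβ : β = σa + σs)
    (K₁ : E →L[ℝ] E) (K₂ : F →L[ℝ] E) (K₃ : F →L[ℝ] F) (K₄ : E →L[ℝ] F)
    (hK₁ : ‖K₁‖ ≤ 1 - ε)
    (hK₂ : ‖K₂‖ ≤ ε * σs / (4 * β))
    (hK₃ : ‖K₃‖ ≤ (σs / β) * (1 - Real.exp (-β * R)))
    (hK₄ : ‖K₄‖ ≤ 4 * (1 - ε) / ε)
    (hcond : ((1 - ε) / ε) * (σs / (σa + σs * Real.exp (-β * R))) < 1) :
    ∀ (f₁ : E) (f₂ : F), ∃! u : E × F,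
      u.1 = K₁ u.1 + K₂ u.2 + f₁ ∧ u.2 = K₄ u.1 + K₃ u.2 + f₂ := by
  intro f₁ f₂
  subst hβ
  set β : ℝ := σa + σs with hβ
  have hβ0 : 0 < β := by positivity
  set x : ℝ := Real.exp (-β * R) with hxdef
  have hx0 : 0 < x := Real.exp_pos _
  have hx1 : x < 1 := by
    rw [hxdef]
    apply Real.exp_lt_one_iff.mpr
    nlinarith
  -- the key scalar inequality from hcond
  have hd : 0 < σa + σs * x := by positivity
  have hlt : (1 - ε) * σs < ε * (σa + σs * x) := by
    have h' := hcond
    rw [div_mul_div_comm, div_lt_one (by positivity)] at h'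
    linarith
  -- invert 1 - K₁
  have hK1lt : ‖K₁‖ < 1 := lt_of_le_of_lt hK₁ (by linarith)
  set u : (E →L[ℝ] E)ˣ := Units.oneSub K₁ hK1lt with hu
  set B : E →L[ℝ] E := ↑u⁻¹ with hBdef
  have hBnorm : ‖B‖ ≤ ε⁻¹ := by
    have h1 : ‖(1 : E →L[ℝ] E)‖ ≤ 1 := ContinuousLinearMap.norm_id_le
    have h2 := tsum_geometric_le_of_norm_lt_one K₁ hK1lt
    have hBe : B = ∑' n : ℕ, K₁ ^ n := rfl
    have h3 : (1 - ‖K₁‖)⁻¹ ≤ ε⁻¹ := by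
      apply inv_anti₀ hε0; linarith
    rw [hBe]
    calc ‖∑' n : ℕ, K₁ ^ n‖ ≤ ‖(1 : E →L[ℝ] E)‖ - 1 + (1 - ‖K₁‖)⁻¹ := h2
      _ ≤ (1 - ‖K₁‖)⁻¹ := by linarith
      _ ≤ ε⁻¹ := h3
  have hBnn : (0:ℝ) ≤ ‖B‖ := norm_nonneg _
  -- the operator T and its norm bound
  set T : F →L[ℝ] F := K₃ + K₄.comp (B.comp K₂) with hTdef
  have hTnorm : ‖T‖ < 1 := by
    have hcomp : ‖K₄.comp (B.comp K₂)‖ ≤ (4 * (1 - ε) / ε) * (ε⁻¹ * (ε * σs / (4 * β))) := by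
      calc ‖K₄.comp (B.comp K₂)‖ ≤ ‖K₄‖ * ‖B.comp K₂‖ := ContinuousLinearMap.opNorm_comp_le _ _
        _ ≤ ‖K₄‖ * (‖B‖ * ‖K₂‖) :=
            mul_le_mul_of_nonneg_left (ContinuousLinearMap.opNorm_comp_le _ _) (norm_nonneg _)
        _ ≤ (4 * (1 - ε) / ε) * (ε⁻¹ * (ε * σs / (4 * β))) := by
            apply mul_le_mul hK₄ _ (by positivity) (le_trans (norm_nonneg K₄) hK₄)
            exact mul_le_mul hBnorm hK₂ (norm_nonneg _) (by positivity)
    have heq : (4 * (1 - ε) / ε) * (ε⁻¹ * (ε * σs / (4 * β))) = (1 - ε) * σs / (ε * β) := by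
      field_simp
    have hfin : (σs / β) * (1 - x) + (1 - ε) * σs / (ε * β) < 1 := by
      rw [div_mul_eq_mul_div, div_add_div _ _ (ne_of_gt hβ0) (by positivity),
        div_lt_one (by positivity)]
      have e : β * (ε * β) = σs * (1 - x) * (ε * β) + β * (ε * (σa + σs * x)) := by
        rw [hβ]; ring
      have h4 := mul_lt_mul_of_pos_left hlt hβ0
      linarith
    calc ‖T‖ ≤ ‖K₃‖ + ‖K₄.comp (B.comp K₂)‖ := norm_add_le _ _
      _ ≤ (σs / β) * (1 - x) + (1 - ε) * σs / (ε * β) := by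
          rw [← heq]; exact add_le_add hK₃ hcomp
      _ < 1 := hfin
  set v : (F →L[ℝ] F)ˣ := Units.oneSub T hTnorm with hv
  set C : F →L[ℝ] F := ↑v⁻¹ with hCdef
  -- basic identities for the units
  have huB : ∀ y : E, (1 - K₁) (B y) = y := fun y => by
    calc (1 - K₁) (B y) = ((↑u * ↑u⁻¹ : E →L[ℝ] E)) y := rfl
      _ = (1 : E →L[ℝ] E) y := by rw [u.mul_inv]
      _ = y := rfl
  have hBu : ∀ y : E, B ((1 - K₁) y) = y := fun y => by
    calc B ((1 - K₁) y) = ((↑u⁻¹ * ↑u : E →L[ℝ] E)) y := rfl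
      _ = (1 : E →L[ℝ] E) y := by rw [u.inv_mul]
      _ = y := rfl
  have hvC : ∀ y : F, (1 - T) (C y) = y := fun y => by
    calc (1 - T) (C y) = ((↑v * ↑v⁻¹ : F →L[ℝ] F)) y := rfl
      _ = (1 : F →L[ℝ] F) y := by rw [v.mul_inv]
      _ = y := rfl
  have hCv : ∀ y : F, C ((1 - T) y) = y := fun y => by
    calc C ((1 - T) y) = ((↑v⁻¹ * ↑v : F →L[ℝ] F)) y := rfl
      _ = (1 : F →L[ℝ] F) y := by rw [v.inv_mul]
      _ = y := rfl
  -- construct the solution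
  set G : F := C (K₄ (B f₁) + f₂) with hGdef
  set q : E := B (K₂ G + f₁) with hqdef
  have hq1 : (1 - K₁) q = K₂ G + f₁ := by rw [hqdef]; exact huB _
  have hG1 : (1 - T) G = K₄ (B f₁) + f₂ := by rw [hGdef]; exact hvC _
  have hq1' : q = K₁ q + K₂ G + f₁ := by
    have : q - K₁ q = K₂ G + f₁ := by
      simpa [ContinuousLinearMap.sub_apply] using hq1
    calc q = K₂ G + f₁ + K₁ q := sub_eq_iff_eq_add.mp this
      _ = K₁ q + K₂ G + f₁ := by abel
  have hG1' : G = K₄ q + K₃ G + f₂ := by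
    have hTG : G - (K₃ G + K₄ (B (K₂ G))) = K₄ (B f₁) + f₂ := by
      simpa [hTdef, ContinuousLinearMap.sub_apply, ContinuousLinearMap.add_apply] using hG1
    have hKq : K₄ q = K₄ (B (K₂ G)) + K₄ (B f₁) := by
      rw [hqdef, map_add, map_add]
    calc G = K₄ (B f₁) + f₂ + (K₃ G + K₄ (B (K₂ G))) := sub_eq_iff_eq_add.mp hTG
      _ = K₄ q + K₃ G + f₂ := by rw [hKq]; abel
  refine ⟨(q, G), ⟨hq1', hG1'⟩, ?_⟩
  rintro ⟨q', G'⟩ ⟨h1, h2⟩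
  simp only at h1 h2
  -- uniqueness
  have hq' : q' = B (K₂ G' + f₁) := by
    have hsub : (1 - K₁) q' = K₂ G' + f₁ := by
      simp only [ContinuousLinearMap.sub_apply, ContinuousLinearMap.one_apply]
      nth_rewrite 1 [h1]; abel
    rw [← hsub, hBu]
  have hG' : (1 - T) G' = K₄ (B f₁) + f₂ := by
    simp only [hTdef, ContinuousLinearMap.sub_apply, ContinuousLinearMap.one_apply,
      ContinuousLinearMap.add_apply, ContinuousLinearMap.comp_apply]
    have : K₄ q' = K₄ (B (K₂ G')) + K₄ (B f₁) := by
      rw [hq', map_add, map_add]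
    nth_rewrite 1 [h2]
    rw [this]; abel
  have hGG : G' = G := by
    rw [hGdef, ← hG', hCv]
  have hqq : q' = q := by rw [hq', hGG, ← hqdef]
  simp [hqq, hGG]
end

section
/- Let E and F be Banach spaces and let ε, σ_s, β, R be real numbers with 0 < ε < 1, σ_s > 0, β > 0, R > 0. Let K₁ : E → E, K₂ : F → E, K₃ : F → F, K₄ : E → F be continuous linear operators satisfying ‖K₁‖ ≤ 1 − ε, ‖K₂‖ ≤ ε σ_s/(4β), ‖K₃‖ ≤ (σ_s/β)(1 − exp(−βR)), ‖K₄‖ ≤ 4(1 − ε)/ε, and assume (σ_s/β)(1/ε − exp(−βR)) < 1. Fix f ∈ E and g ∈ F, and define sequences (qⁿ) in E and (Gⁿ) in F by: G⁰ ∈ F arbitrary, qⁿ is the unique solution of qⁿ = K₁ qⁿ + K₂ Gⁿ + f (which exists since ‖K₁‖ < 1), and G^{n+1} = K₃ Gⁿ + K₄ qⁿ + g. Then the operator T = K₃ + K₄ ∘ (I − K₁)⁻¹ ∘ K₂ satisfies ‖T‖ < 1, and the sequence (Gⁿ) converges in F to the unique G* ∈ F satisfying G* = T G* + g̃ with g̃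 = K₄ (I − K₁)⁻¹ f + g, while (qⁿ) converges to q* = (I − K₁)⁻¹(K₂ G* + f). -/
open Filter

/-- Quantitative form of the paper's Corollary 2: under the norm bounds of Corollary 1 and the
condition `(σs/β)(1/ε - exp(-βR)) < 1`, the iteration operator
`T = K₃ + K₄ (I - K₁)⁻¹ K₂` is a contraction (`‖T‖ < 1`), the iterates `Gⁿ` of scheme (14)
converge to the unique fixed point `G* = T G* + g̃` with `g̃ = K₄ (I - K₁)⁻¹ f + g`, and the
iterates `qⁿ` converge to `q* = (I - K₁)⁻¹ (K₂ G* + f)`. -/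
theorem stmt_4 {E F : Type*} [NormedAddCommGroup E] [NormedSpace ℝ E] [CompleteSpace E]
    [NormedAddCommGroup F] [NormedSpace ℝ F] [CompleteSpace F]
    (ε σs β R : ℝ) (hε0 : 0 < ε) (hε1 : ε < 1) (hσs : 0 < σs) (hβ : 0 < β) (hR : 0 < R)
    (K₁ : E →L[ℝ] E) (K₂ : F →L[ℝ] E) (K₃ : F →L[ℝ] F) (K₄ : E →L[ℝ] F)
    (hK₁ : ‖K₁‖ ≤ 1 - ε)
    (hK₂ : ‖K₂‖ ≤ ε * σs / (4 * β))
    (hK₃ : ‖K₃‖ ≤ (σs / β) * (1 - Real.exp (-β * R)))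
    (hK₄ : ‖K₄‖ ≤ 4 * (1 - ε) / ε)
    (hcond : (σs / β) * (1 / ε - Real.exp (-β * R)) < 1)
    (f : E) (g : F) (q : ℕ → E) (G : ℕ → F)
    (hq : ∀ n, q n = K₁ (q n) + K₂ (G n) + f)
    (hG : ∀ n, G (n + 1) = K₃ (G n) + K₄ (q n) + g) :
    ∀ h₁ : ‖K₁‖ < 1,
      ‖K₃ + K₄.comp ((↑(Units.oneSub K₁ h₁)⁻¹ : E →L[ℝ] E).comp K₂)‖ < 1 ∧
      (∃! Gs : F, Gs = (K₃ + K₄.comp ((↑(Units.oneSub K₁ h₁)⁻¹ : E →L[ℝ] E).comp K₂)) Gs +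
          (K₄ ((↑(Units.oneSub K₁ h₁)⁻¹ : E →L[ℝ] E) f) + g)) ∧
      ∀ Gs : F, Gs = (K₃ + K₄.comp ((↑(Units.oneSub K₁ h₁)⁻¹ : E →L[ℝ] E).comp K₂)) Gs +
          (K₄ ((↑(Units.oneSub K₁ h₁)⁻¹ : E →L[ℝ] E) f) + g) →
        Tendsto G atTop (nhds Gs) ∧
        Tendsto q atTop (nhds ((↑(Units.oneSub K₁ h₁)⁻¹ : E →L[ℝ] E) (K₂ Gs + f))) := by
  intro h₁
  set S : E →L[ℝ] E := (↑(Units.oneSub K₁ h₁)⁻¹ : E →L[ℝ] E) with hS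
  set T : F →L[ℝ] F := K₃ + K₄.comp (S.comp K₂) with hT
  have hεK₁ : ε ≤ 1 - ‖K₁‖ := by linarith
  -- norm of S
  have hSnorm : ‖S‖ ≤ (1 - ‖K₁‖)⁻¹ := by
    have : S = ∑' n : ℕ, K₁ ^ n := rfl
    rw [this]
    have h1 : ‖(1 : E →L[ℝ] E)‖ ≤ 1 := ContinuousLinearMap.norm_id_le
    have := tsum_geometric_le_of_norm_lt_one K₁ h₁
    linarith
  have hinv : (0:ℝ) < 1 - ‖K₁‖ := by linarith
  have hSε : ‖S‖ ≤ ε⁻¹ := le_trans hSnorm (by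
    apply inv_anti₀ hε0 hεK₁)
  -- T is a contraction
  have hSval : ∀ x : E, S ((1 - K₁) x) = x := by
    intro x
    have h : (S * (1 - K₁)) x = (1 : E →L[ℝ] E) x := by
      rw [show (S * (1 - K₁)) = 1 from (Units.oneSub K₁ h₁).inv_mul]
    simpa using h
  have hTnorm : ‖T‖ < 1 := by
    have e1 : ‖K₄.comp (S.comp K₂)‖ ≤ ‖K₄‖ * (‖S‖ * ‖K₂‖) :=
      le_trans (ContinuousLinearMap.opNorm_comp_le _ _)
        (by gcongr; exact ContinuousLinearMap.opNorm_comp_le _ _)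
    have e2 : ‖T‖ ≤ ‖K₃‖ + ‖K₄‖ * (‖S‖ * ‖K₂‖) := le_trans (norm_add_le _ _) (by linarith)
    have hK₄0 : (0:ℝ) ≤ ‖K₄‖ := norm_nonneg _
    have hK₂0 : (0:ℝ) ≤ ‖K₂‖ := norm_nonneg _
    have hS0 : (0:ℝ) ≤ ‖S‖ := norm_nonneg _
    have key : ‖K₄‖ * (‖S‖ * ‖K₂‖) ≤ (4 * (1 - ε) / ε) * (ε⁻¹ * (ε * σs / (4 * β))) := by
      have h4 : (0:ℝ) ≤ 4 * (1 - ε) / ε := by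
        apply div_nonneg _ hε0.le
        nlinarith
      have hb : (0:ℝ) ≤ ε⁻¹ := by positivity
      gcongr
    have hval : (4 * (1 - ε) / ε) * (ε⁻¹ * (ε * σs / (4 * β))) = (1 - ε) * σs / (ε * β) := by
      field_simp
    have hexp : Real.exp (-β * R) ≤ 1 := by
      apply Real.exp_le_one_iff.mpr; nlinarith
    have : ‖T‖ ≤ (σs / β) * (1 - Real.exp (-β * R)) + (1 - ε) * σs / (ε * β) := by
      rw [hval] at key; linarith
    have heq : (σs / β) * (1 - Real.exp (-β * R)) + (1 - ε) * σs / (ε * β)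
        = (σs / β) * (1 / ε - Real.exp (-β * R)) := by
      field_simp; ring
    linarith [heq ▸ this]
  refine ⟨hTnorm, ?_, ?_⟩
  · -- unique fixed point
    set g' : F := K₄ (S f) + g
    set u : (F →L[ℝ] F)ˣ := Units.oneSub T hTnorm
    refine ⟨(↑u⁻¹ : F →L[ℝ] F) g', ?_, ?_⟩
    · have h : (↑u⁻¹ : F →L[ℝ] F) g' - T ((↑u⁻¹ : F →L[ℝ] F) g') = g' := by
        have h' : ((1 - T) * (↑u⁻¹ : F →L[ℝ] F)) g' = (1 : F →L[ℝ] F) g' := by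
          rw [show ((1 - T) * (↑u⁻¹ : F →L[ℝ] F)) = 1 from u.mul_inv]
        simpa [sub_mul] using h'
      exact sub_eq_iff_eq_add'.mp h
    · intro y hy
      have h : (↑u⁻¹ : F →L[ℝ] F) ((1 - T) y) = y := by
        have h' : ((↑u⁻¹ : F →L[ℝ] F) * (1 - T)) y = (1 : F →L[ℝ] F) y := by
          rw [show ((↑u⁻¹ : F →L[ℝ] F) * (1 - T)) = 1 from u.inv_mul]
        simpa using h'
      have h2 : (1 - T) y = g' := by
        simp only [ContinuousLinearMap.sub_apply, ContinuousLinearMap.one_apply]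
        exact sub_eq_iff_eq_add'.mpr hy
      rw [h2] at h
      exact h.symm
  · intro Gs hGs
    -- q n = S (K₂ (G n) + f)
    have hqS : ∀ n, q n = S (K₂ (G n) + f) := by
      intro n
      have h : (1 - K₁) (q n) = K₂ (G n) + f := by
        simp only [ContinuousLinearMap.sub_apply, ContinuousLinearMap.one_apply]
        rw [sub_eq_iff_eq_add']
        conv_lhs => rw [hq n]
        abel
      calc q n = S ((1 - K₁) (q n)) := (hSval _).symm
        _ = S (K₂ (G n) + f) := by rw [h]
    -- recurrence G (n+1) = T (G n) + (K₄ (S f) + g)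
    have hGT : ∀ n, G (n + 1) = T (G n) + (K₄ (S f) + g) := by
      intro n
      rw [hG n, hqS n]
      simp only [hT, ContinuousLinearMap.add_apply, ContinuousLinearMap.coe_comp',
        Function.comp_apply, map_add]
      abel
    -- error contraction
    have herr : ∀ n, ‖G n - Gs‖ ≤ ‖T‖ ^ n * ‖G 0 - Gs‖ := by
      intro n
      induction n with
      | zero => simp
      | succ n ih =>
        have hstep : G (n + 1) - Gs = T (G n - Gs) := by
          rw [hGT n, map_sub]
          nth_rewrite 1 [hGs]
          abel
        rw [hstep]
        calc ‖T (G n - Gs)‖ ≤ ‖T‖ * ‖G n - Gs‖ := T.le_opNorm _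
          _ ≤ ‖T‖ * (‖T‖ ^ n * ‖G 0 - Gs‖) := by gcongr
          _ = ‖T‖ ^ (n + 1) * ‖G 0 - Gs‖ := by ring
    have hGtend : Tendsto G atTop (nhds Gs) := by
      rw [tendsto_iff_norm_sub_tendsto_zero]
      apply squeeze_zero (fun n => norm_nonneg _) herr
      have := tendsto_pow_atTop_nhds_zero_of_norm_lt_one (x := ‖T‖) (by simpa using hTnorm)
      simpa using this.mul_const ‖G 0 - Gs‖
    refine ⟨hGtend, ?_⟩
    have hcont : Continuous fun y : F => S (K₂ y + f) :=
      S.continuous.comp (K₂.continuous.add continuous_const)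
    have := (hcont.tendsto Gs).comp hGtend
    simpa only [Function.comp_def, ← hqS] using this
end

section
/- Let p ∈ ℝ³, let n ∈ ℝ³ be a unit vector, and let β > 0. Then the integral of exp(−β‖r − p‖) · ((r − p) · n) / ‖r − p‖³ over the open half-space H = { r ∈ ℝ³ : (r − p) · n > 0 } with respect to Lebesgue measure equals π/β. -/
open MeasureTheory Real
open scoped RealInnerProductSpace

noncomputable section

namespace Stmt5Aux

open Set Metric

local notation "E3" => EuclideanSpace ℝ (Fin 3)

lemma hdim : Module.finrank ℝ (EuclideanSpace ℝ (Fin 3)) - 1 = 2 := by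
  simp [finrank_euclideanSpace]

/-- Polar decomposition specialized to `ℝ³`. -/
lemma polar3 (F : EuclideanSpace ℝ (Fin 3) → ℝ)
    (g : Metric.sphere (0 : EuclideanSpace ℝ (Fin 3)) 1 → ℝ) (f : ℝ → ℝ)
    (hF : ∀ x : ({0}ᶜ : Set (EuclideanSpace ℝ (Fin 3))),
      F x = g ((homeomorphUnitSphereProd (EuclideanSpace ℝ (Fin 3))) x).1 *
        f ‖(x : EuclideanSpace ℝ (Fin 3))‖) :
    ∫ x, F x =
      (∫ ω, g ω ∂(volume : Measure (EuclideanSpace ℝ (Fin 3))).toSphere) *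
        ∫ r in Ioi (0 : ℝ), r ^ 2 * f r := by
  calc
    ∫ x, F x ∂(volume : Measure E3)
        = ∫ x : ({0}ᶜ : Set E3), F x ∂((volume : Measure E3).comap (↑)) := by
          rw [integral_subtype_comap (measurableSet_singleton _).compl fun x ↦ F x,
            restrict_compl_singleton]
    _ = ∫ x : ({0}ᶜ : Set E3), (fun y : sphere (0:E3) 1 × Ioi (0:ℝ) => g y.1 * f y.2.1)
          ((homeomorphUnitSphereProd E3) x) ∂((volume : Measure E3).comap (↑)) := by
          refine integral_congr_ae (Filter.Eventually.of_forall fun x => ?_)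
          simp only [homeomorphUnitSphereProd_apply_snd_coe]
          exact hF x
    _ = ∫ y : sphere (0:E3) 1 × Ioi (0:ℝ), g y.1 * f y.2.1
          ∂((volume : Measure E3).toSphere.prod (.volumeIoiPow 2)) := by
          rw [← hdim]
          exact (Measure.measurePreserving_homeomorphUnitSphereProd
              (volume : Measure E3)).integral_comp
            (Homeomorph.measurableEmbedding _)
            (fun y : sphere (0:E3) 1 × Ioi (0:ℝ) => g y.1 * f y.2.1)
    _ = (∫ ω, g ω ∂(volume : Measure E3).toSphere) *
          ∫ r : Ioi (0:ℝ), f r ∂(Measure.volumeIoiPow 2) :=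
          integral_prod_mul (fun ω : sphere (0:E3) 1 => g ω) (fun r : Ioi (0:ℝ) => f r)
    _ = _ := by
      congr 1
      simp only [Measure.volumeIoiPow, ENNReal.ofReal]
      rw [integral_withDensity_eq_integral_smul
          ((measurable_subtype_coe.pow_const _).real_toNNReal),
        integral_subtype_comap measurableSet_Ioi fun a : ℝ ↦ Real.toNNReal (a ^ 2) • f a,
        setIntegral_congr_fun measurableSet_Ioi fun x hx ↦ ?_]
      rw [NNReal.smul_def, Real.coe_toNNReal _ (pow_nonneg hx.out.le _), smul_eq_mul]

lemma Gamma_two' : Real.Gamma 2 = 1 := by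
  rw [show (2:ℝ) = 1 + 1 by norm_num, Real.Gamma_add_one one_ne_zero, Real.Gamma_one, mul_one]

lemma L1 {β : ℝ} (hβ : 0 < β) : ∫ x in Ioi (0:ℝ), Real.exp (-β * x) = 1 / β := by
  have h := integral_rpow_mul_exp_neg_mul_rpow (p := 1) (q := 0) (b := β)
    one_pos (by norm_num) hβ
  simp only [rpow_zero, one_mul, rpow_one] at h
  rw [h]
  norm_num [Real.rpow_neg_one]

lemma L2 : ∫ x in Ioi (0:ℝ), x * Real.exp (-x ^ 2) = 1 / 2 := by
  have h := integral_rpow_mul_exp_neg_mul_rpow (p := 2) (q := 1) (b := 1)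
    two_pos (by norm_num) one_pos
  rw [setIntegral_congr_fun measurableSet_Ioi (fun x hx => ?_)] at h
  · rw [h]
    norm_num [Real.Gamma_one]
  · show x ^ (1:ℝ) * Real.exp (-1 * x ^ (2:ℝ)) = x * Real.exp (-x ^ 2)
    rw [rpow_one, show (2:ℝ) = ((2:ℕ):ℝ) by norm_num, rpow_natCast, neg_one_mul]

lemma L3 : ∫ x in Ioi (0:ℝ), x ^ 2 * (x * Real.exp (-x ^ 2)) = 1 / 2 := by
  have h := integral_rpow_mul_exp_neg_mul_rpow (p := 2) (q := 3) (b := 1)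
    two_pos (by norm_num) one_pos
  rw [setIntegral_congr_fun measurableSet_Ioi (fun x hx => ?_)] at h
  · rw [h]
    norm_num [Gamma_two']
  · show x ^ (3:ℝ) * Real.exp (-1 * x ^ (2:ℝ)) = x ^ 2 * (x * Real.exp (-x ^ 2))
    rw [show (3:ℝ) = ((3:ℕ):ℝ) by norm_num, rpow_natCast,
      show (2:ℝ) = ((2:ℕ):ℝ) by norm_num, rpow_natCast, neg_one_mul]
    ring

lemma Lmax : ∫ x : ℝ, max x 0 * Real.exp (-x ^ 2) = 1 / 2 := by
  have h : (fun x : ℝ => max x 0 * Real.exp (-x ^ 2)) =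
      Set.indicator (Ioi (0:ℝ)) (fun x => x * Real.exp (-x ^ 2)) := by
    funext x
    rcases le_or_gt x 0 with hx | hx
    · have hx' : x ∉ Ioi (0:ℝ) := by simpa using hx
      rw [Set.indicator_of_notMem hx', max_eq_right hx, zero_mul]
    · have hx' : x ∈ Ioi (0:ℝ) := hx
      rw [Set.indicator_of_mem hx', max_eq_left hx.le]
  rw [h, integral_indicator measurableSet_Ioi, L2]

lemma Lgauss : ∫ x : ℝ, Real.exp (-x ^ 2) = Real.sqrt π := by
  have h := integral_gaussian 1
  simpa using h

/-- Coordinate factors for the Gaussian computation. -/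
def h3 : Fin 3 → ℝ → ℝ := fun i t =>
  if i = 0 then max t 0 * Real.exp (-t ^ 2) else Real.exp (-t ^ 2)

lemma gauss_int (n : E3) (hn : ‖n‖ = 1) :
    ∫ x : E3, Real.exp (-‖x‖ ^ 2) * max ⟪x, n⟫ 0 = π / 2 := by
  -- an orthonormal basis whose 0-th vector is `n`
  have ho : Orthonormal ℝ (({0} : Set (Fin 3)).restrict fun _ => n) := by
    rw [orthonormal_iff_ite]
    intro i j
    have hij : i = j := Subtype.ext ((Set.mem_singleton_iff.mp i.2).trans
      (Set.mem_singleton_iff.mp j.2).symm)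
    subst hij
    rw [if_pos rfl]
    show ⟪n, n⟫ = 1
    rw [real_inner_self_eq_norm_sq, hn, one_pow]
  obtain ⟨b, hb⟩ := ho.exists_orthonormalBasis_extension_of_card_eq
    (by simp [finrank_euclideanSpace])
  have hb0 : b 0 = n := hb 0 rfl
  have step1 : ∫ x : E3, Real.exp (-‖x‖ ^ 2) * max ⟪x, n⟫ 0
      = ∫ y : E3, Real.exp (-‖y‖ ^ 2) * max (y 0) 0 := by
    calc ∫ x : E3, Real.exp (-‖x‖ ^ 2) * max ⟪x, n⟫ 0
        = ∫ y : E3, Real.exp (-‖b.repr.symm y‖ ^ 2) * max ⟪b.repr.symm y, n⟫ 0 :=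
          ((b.measurePreserving_repr_symm).integral_comp
            b.repr.symm.toHomeomorph.measurableEmbedding
            (fun x => Real.exp (-‖x‖ ^ 2) * max ⟪x, n⟫ 0)).symm
      _ = _ := by
          refine integral_congr_ae (Filter.Eventually.of_forall fun y => ?_)
          show Real.exp (-‖b.repr.symm y‖ ^ 2) * max ⟪b.repr.symm y, n⟫ 0
            = Real.exp (-‖y‖ ^ 2) * max (y 0) 0
          have h1 : ⟪b.repr.symm y, n⟫ = y 0 := by
            rw [real_inner_comm, ← hb0, ← OrthonormalBasis.repr_apply_apply,
              LinearIsometryEquiv.apply_symm_apply]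
          rw [LinearIsometryEquiv.norm_map, h1]
  have step2 : ∫ y : E3, Real.exp (-‖y‖ ^ 2) * max (y 0) 0
      = ∫ z : Fin 3 → ℝ, ∏ i, h3 i (z i) := by
    rw [← ((EuclideanSpace.volume_preserving_symm_measurableEquiv_toLp (Fin 3)).symm).integral_comp'
      (fun y : E3 => Real.exp (-‖y‖ ^ 2) * max (y 0) 0)]
    refine integral_congr_ae (Filter.Eventually.of_forall fun z => ?_)
    have hnorm : ‖(MeasurableEquiv.toLp 2 (Fin 3 → ℝ)).symm.symm z‖ ^ 2 = ∑ i, z i ^ 2 := by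
      rw [EuclideanSpace.norm_eq, Real.sq_sqrt (by positivity)]
      simp [Real.norm_eq_abs, sq_abs]
    have happ : ∀ i, ((MeasurableEquiv.toLp 2 (Fin 3 → ℝ)).symm.symm z) i = z i := fun _ => rfl
    simp only [happ, hnorm, Fin.sum_univ_three, Fin.prod_univ_three, h3]
    simp only [if_true, if_neg (show ¬(1:Fin 3) = 0 by decide),
      if_neg (show ¬(2:Fin 3) = 0 by decide)]
    rw [show -(z 0 ^ 2 + z 1 ^ 2 + z 2 ^ 2) = -(z 0 ^ 2) + -(z 1 ^ 2) + -(z 2 ^ 2) by ring,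
      Real.exp_add, Real.exp_add]
    ring
  rw [step1, step2, MeasureTheory.integral_fintype_prod_volume_eq_prod (ι := Fin 3) (f := h3),
    Fin.prod_univ_three]
  have e0 : ∫ x : ℝ, h3 0 x = 1 / 2 := by
    simp only [h3, if_pos rfl]; exact Lmax
  have e1 : ∫ x : ℝ, h3 1 x = Real.sqrt π := by
    simp only [h3, if_neg (show ¬(1:Fin 3) = 0 by decide)]; exact Lgauss
  have e2 : ∫ x : ℝ, h3 2 x = Real.sqrt π := by
    simp only [h3, if_neg (show ¬(2:Fin 3) = 0 by decide)]; exact Lgauss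
  rw [e0, e1, e2, mul_assoc, Real.mul_self_sqrt pi_nonneg]
  ring

lemma max_pull (c a : ℝ) (hc : 0 ≤ c) : max (c * a) 0 = c * max a 0 := by
  rw [mul_max_of_nonneg _ _ hc, mul_zero]

lemma sphere_int (n : E3) (hn : ‖n‖ = 1) :
    ∫ ω : sphere (0:E3) 1, max ⟪(ω : E3), n⟫ 0 ∂(volume : Measure E3).toSphere = π := by
  have hF : ∀ x : ({0}ᶜ : Set E3),
      (fun x : E3 => Real.exp (-‖x‖ ^ 2) * max ⟪x, n⟫ 0) x
        = (fun ω : sphere (0:E3) 1 => max ⟪(ω : E3), n⟫ 0)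
            ((homeomorphUnitSphereProd E3) x).1
          * (fun r : ℝ => r * Real.exp (-r ^ 2)) ‖(x : E3)‖ := by
    rintro ⟨x, hx⟩
    have hx0 : x ≠ 0 := hx
    have hnx : ‖x‖ ≠ 0 := norm_ne_zero_iff.mpr hx0
    simp only [homeomorphUnitSphereProd_apply_fst_coe]
    show Real.exp (-‖x‖ ^ 2) * max ⟪x, n⟫ 0
      = max ⟪‖x‖⁻¹ • x, n⟫ 0 * (‖x‖ * Real.exp (-‖x‖ ^ 2))
    rw [real_inner_smul_left, max_pull _ _ (by positivity)]
    field_simp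
  have hS := polar3 (fun x : E3 => Real.exp (-‖x‖ ^ 2) * max ⟪x, n⟫ 0)
    (fun ω : sphere (0:E3) 1 => max ⟪(ω : E3), n⟫ 0)
    (fun r : ℝ => r * Real.exp (-r ^ 2)) hF
  have h1 : (π / 2 : ℝ)
      = (∫ ω : sphere (0:E3) 1, max ⟪(ω : E3), n⟫ 0 ∂(volume : Measure E3).toSphere)
        * (1 / 2) := by
    rw [← gauss_int n hn, ← L3]
    exact hS
  linarith

lemma appA (n : E3) (hn : ‖n‖ = 1) {β : ℝ} (hβ : 0 < β) :
    ∫ x : E3, Real.exp (-β * ‖x‖) * max ⟪x, n⟫ 0 / ‖x‖ ^ 3 = π / β := by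
  have hF : ∀ x : ({0}ᶜ : Set E3),
      (fun x : E3 => Real.exp (-β * ‖x‖) * max ⟪x, n⟫ 0 / ‖x‖ ^ 3) x
        = (fun ω : sphere (0:E3) 1 => max ⟪(ω : E3), n⟫ 0)
            ((homeomorphUnitSphereProd E3) x).1
          * (fun r : ℝ => Real.exp (-β * r) / r ^ 2) ‖(x : E3)‖ := by
    rintro ⟨x, hx⟩
    have hx0 : x ≠ 0 := hx
    have hnx : ‖x‖ ≠ 0 := norm_ne_zero_iff.mpr hx0
    simp only [homeomorphUnitSphereProd_apply_fst_coe]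
    show Real.exp (-β * ‖x‖) * max ⟪x, n⟫ 0 / ‖x‖ ^ 3
      = max ⟪‖x‖⁻¹ • x, n⟫ 0 * (Real.exp (-β * ‖x‖) / ‖x‖ ^ 2)
    rw [real_inner_smul_left, max_pull _ _ (by positivity)]
    field_simp
  have hS := polar3 (fun x : E3 => Real.exp (-β * ‖x‖) * max ⟪x, n⟫ 0 / ‖x‖ ^ 3)
    (fun ω : sphere (0:E3) 1 => max ⟪(ω : E3), n⟫ 0)
    (fun r : ℝ => Real.exp (-β * r) / r ^ 2) hF
  have hW : ∫ r in Ioi (0:ℝ), r ^ 2 * (Real.exp (-β * r) / r ^ 2) = 1 / β := by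
    rw [setIntegral_congr_fun measurableSet_Ioi
      (fun x hx => by
        have hx0 : (x:ℝ) ≠ 0 := ne_of_gt hx
        show x ^ 2 * (Real.exp (-β * x) / x ^ 2) = Real.exp (-β * x)
        field_simp)]
    exact L1 hβ
  rw [hS, hW, sphere_int n hn]
  rw [div_eq_mul_one_div π β]

end Stmt5Aux

end

/-- Exact half-space integral underlying inequality (10) of the paper's Lemma 2: for a unit
vector `n` and `β > 0`, the integral of `exp(-β‖r - p‖) ((r - p)·n)/‖r - p‖³` over the open
half-space `{r : (r - p)·n > 0}` equals `π/β`. -/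
theorem stmt_5 (p n : EuclideanSpace ℝ (Fin 3)) (hn : ‖n‖ = 1) (β : ℝ) (hβ : 0 < β) :
    ∫ r in {r : EuclideanSpace ℝ (Fin 3) | 0 < ⟪r - p, n⟫},
      Real.exp (-β * ‖r - p‖) * ⟪r - p, n⟫ / ‖r - p‖ ^ 3 = π / β := by
  classical
  set f : EuclideanSpace ℝ (Fin 3) → ℝ :=
    fun r => Real.exp (-β * ‖r - p‖) * ⟪r - p, n⟫ / ‖r - p‖ ^ 3 with hf
  have hSmeas : MeasurableSet {r : EuclideanSpace ℝ (Fin 3) | 0 < ⟪r - p, n⟫} :=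
    measurableSet_lt measurable_const
      (((continuous_id.sub continuous_const).inner continuous_const).measurable)
  have key : ∀ x : EuclideanSpace ℝ (Fin 3),
      Set.indicator {r : EuclideanSpace ℝ (Fin 3) | 0 < ⟪r - p, n⟫} f (x + p)
        = Real.exp (-β * ‖x‖) * max ⟪x, n⟫ 0 / ‖x‖ ^ 3 := by
    intro x
    have hxp : x + p - p = x := add_sub_cancel_right x p
    rcases le_or_gt ⟪x, n⟫ 0 with h | h
    · have hmem : x + p ∉ {r : EuclideanSpace ℝ (Fin 3) | 0 < ⟪r - p, n⟫} := by
        simp only [Set.mem_setOf_eq, hxp]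
        exact not_lt.mpr h
      rw [Set.indicator_of_notMem hmem, max_eq_right h, mul_zero, zero_div]
    · have hmem : x + p ∈ {r : EuclideanSpace ℝ (Fin 3) | 0 < ⟪r - p, n⟫} := by
        simp only [Set.mem_setOf_eq, hxp]
        exact h
      rw [Set.indicator_of_mem hmem, hf]
      simp only [hxp]
      rw [max_eq_left h.le]
  calc
    ∫ r in {r : EuclideanSpace ℝ (Fin 3) | 0 < ⟪r - p, n⟫}, f r
        = ∫ r, Set.indicator {r : EuclideanSpace ℝ (Fin 3) | 0 < ⟪r - p, n⟫} f r :=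
          (integral_indicator hSmeas).symm
    _ = ∫ x, Set.indicator {r : EuclideanSpace ℝ (Fin 3) | 0 < ⟪r - p, n⟫} f (x + p) :=
          (integral_add_right_eq_self _ p).symm
    _ = ∫ x, Real.exp (-β * ‖x‖) * max ⟪x, n⟫ 0 / ‖x‖ ^ 3 :=
          integral_congr_ae (Filter.Eventually.of_forall key)
    _ = π / β := Stmt5Aux.appA n hn hβ
end

section
/- Let p ∈ ℝ³, let n ∈ ℝ³ be a unit vector, let β > 0, and let V ⊆ ℝ³ be a measurable set contained in the half-space { r ∈ ℝ³ : (r − p) · n > 0 }. Then ∫_V exp(−β‖r − p‖) · ((r − p) · n) / ‖r − p‖³ dr ≤ π/β. -/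
open MeasureTheory Real
open scoped RealInnerProductSpace
open Set
open scoped ENNReal

lemma my_lintegral_cov {s : Set ℝ} {f f' : ℝ → ℝ}
    (hs : MeasurableSet s) (hf' : ∀ x ∈ s, HasDerivWithinAt f (f' x) s x)
    (hf : Set.InjOn f s) (g : ℝ → ℝ≥0∞) :
    ∫⁻ x in f '' s, g x = ∫⁻ x in s, ENNReal.ofReal |f' x| * g (f x) := by
  simpa only [ContinuousLinearMap.det_toSpanSingleton] using
    lintegral_image_eq_lintegral_abs_det_fderiv_mul volume hs
      (fun x hx => (hf' x hx).hasFDerivWithinAt) hf g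

lemma my_setLIntegral_comp {α β : Type*} [MeasurableSpace α] [MeasurableSpace β]
    {μ : Measure α} {ν : Measure β} {g : α → β} (hg : MeasurePreserving g μ ν)
    (hemb : MeasurableEmbedding g) (f : β → ℝ≥0∞) {s : Set β} (hs : MeasurableSet s) :
    ∫⁻ x in g ⁻¹' s, f (g x) ∂μ = ∫⁻ y in s, f y ∂ν := by
  rw [← lintegral_indicator (hemb.measurable hs) _, ← lintegral_indicator hs _,
    ← hg.map_eq, hemb.lintegral_map]

  refine lintegral_congr fun x => ?_
  by_cases h : g x ∈ s <;> simp [Set.indicator_apply, h]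

lemma my_polar (f : ℝ × ℝ → ℝ≥0∞) :
    ∫⁻ p, f p = ∫⁻ p in polarCoord.target, ENNReal.ofReal p.1 * f (polarCoord.symm p) := by
  set B : ℝ × ℝ → ℝ × ℝ →L[ℝ] ℝ × ℝ := fun p =>
    LinearMap.toContinuousLinearMap (Matrix.toLin (Module.Basis.finTwoProd ℝ) (Module.Basis.finTwoProd ℝ)
      !![Real.cos p.2, -p.1 * Real.sin p.2; Real.sin p.2, p.1 * Real.cos p.2])
  have A : ∀ p ∈ polarCoord.symm.source, HasFDerivAt polarCoord.symm (B p) p := fun p _ =>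
    hasFDerivAt_polarCoord_symm p
  have B_det : ∀ p, (B p).det = p.1 := by
    intro p
    conv_rhs => rw [← one_mul p.1, ← cos_sq_add_sin_sq p.2]
    simp only [B, neg_mul, LinearMap.det_toContinuousLinearMap, LinearMap.det_toLin,
      Matrix.det_fin_two_of, sub_neg_eq_add]
    ring
  rw [← setLIntegral_univ, ← setLIntegral_congr polarCoord_source_ae_eq_univ,
    ← polarCoord.symm_image_target_eq_source,
    lintegral_image_eq_lintegral_abs_det_fderiv_mul volume polarCoord.open_target.measurableSet
      (fun p hp => (A p (by rwa [OpenPartialHomeomorph.symm_source])).hasFDerivWithinAt)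
      polarCoord.symm.injOn f]
  refine setLIntegral_congr_fun_ae polarCoord.open_target.measurableSet (ae_of_all _ fun p hp => ?_)
  rw [polarCoord_target] at hp
  rw [B_det, abs_of_pos hp.1]

lemma my_radial (g : ℝ → ℝ≥0∞) (hg : Measurable g) :
    ∫⁻ w : ℝ × ℝ, g (Real.sqrt (w.1^2 + w.2^2)) =
      ENNReal.ofReal (2*π) * ∫⁻ ρ in Ioi (0:ℝ), ENNReal.ofReal ρ * g ρ := by
  rw [my_polar (fun w => g (Real.sqrt (w.1^2 + w.2^2)))]
  have h1 : ∀ p ∈ polarCoord.target,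
      ENNReal.ofReal p.1 * g (Real.sqrt ((polarCoord.symm p).1^2 + (polarCoord.symm p).2^2))
        = ENNReal.ofReal p.1 * g p.1 := by
    intro p hp
    rw [polarCoord_target] at hp
    have : (polarCoord.symm p).1^2 + (polarCoord.symm p).2^2 = p.1^2 := by
      rw [polarCoord_symm_apply]
      ring_nf
      rw [← mul_add, Real.cos_sq_add_sin_sq, mul_one]
    rw [this, Real.sqrt_sq (le_of_lt hp.1)]
  rw [setLIntegral_congr_fun_ae polarCoord.open_target.measurableSet (ae_of_all _ h1),
    polarCoord_target, Measure.volume_eq_prod, ← Measure.prod_restrict]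
  rw [lintegral_prod (fun x => ENNReal.ofReal x.1 * g x.1)
    ((ENNReal.measurable_ofReal.comp measurable_fst).mul
    (hg.comp measurable_fst)).aemeasurable]
  simp only [lintegral_const, Measure.restrict_apply MeasurableSet.univ, univ_inter,
    Real.volume_Ioo]
  have h2 : ENNReal.ofReal (π - -π) = ENNReal.ofReal (2*π) := by ring_nf
  rw [h2, lintegral_mul_const' (ENNReal.ofReal (2*π)) _ ENNReal.ofReal_ne_top, mul_comm]

lemma my_subst (β z : ℝ) (hz : 0 < z) :
    ∫⁻ ρ in Ioi (0:ℝ), ENNReal.ofReal ρ *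
        ENNReal.ofReal (Real.exp (-β * Real.sqrt (z^2+ρ^2)) * z / Real.sqrt (z^2+ρ^2)^3)
      = ∫⁻ u in Ioi z, ENNReal.ofReal (z * Real.exp (-β*u) / u^2) := by
  have himg : (fun ρ => Real.sqrt (z^2+ρ^2)) '' Ioi 0 = Ioi z := by
    ext u
    constructor
    · rintro ⟨ρ, hρ, rfl⟩
      have : z = Real.sqrt (z^2) := (Real.sqrt_sq hz.le).symm
      rw [mem_Ioi, this]
      exact Real.sqrt_lt_sqrt (sq_nonneg z) (by nlinarith [mem_Ioi.1 hρ])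
    · intro hu
      have hu' : z < u := hu
      have h1 : (0:ℝ) < u^2 - z^2 := by nlinarith
      refine ⟨Real.sqrt (u^2 - z^2), Real.sqrt_pos.2 h1, ?_⟩
      show Real.sqrt (z^2 + Real.sqrt (u^2-z^2)^2) = u
      rw [Real.sq_sqrt h1.le, show z^2 + (u^2 - z^2) = u^2 by ring, Real.sqrt_sq (by linarith)]
  have hderiv : ∀ ρ ∈ Ioi (0:ℝ), HasDerivWithinAt (fun ρ => Real.sqrt (z^2+ρ^2))
      (ρ / Real.sqrt (z^2+ρ^2)) (Ioi 0) ρ := by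
    intro ρ hρ
    have hne : z^2 + ρ^2 ≠ 0 := by positivity
    have h := (Real.hasDerivAt_sqrt hne).comp ρ
      ((hasDerivAt_pow 2 ρ).const_add (z^2))
    have := h.hasDerivWithinAt (s := Ioi 0)
    refine this.congr_deriv ?_
    have hs : Real.sqrt (z^2+ρ^2) ≠ 0 := by positivity
    field_simp
    ring
  have hinj : Set.InjOn (fun ρ => Real.sqrt (z^2+ρ^2)) (Ioi 0) := by
    intro a ha b hb hab
    simp only [mem_Ioi] at ha hb
    have : z^2 + a^2 = z^2 + b^2 := by
      rwa [Real.sqrt_inj (by positivity) (by positivity)] at hab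
    nlinarith
  rw [← himg, my_lintegral_cov measurableSet_Ioi hderiv hinj]
  refine setLIntegral_congr_fun_ae measurableSet_Ioi (ae_of_all _ fun ρ hρ => ?_)
  have hρ' : (0:ℝ) < ρ := hρ
  have hu : (0:ℝ) < Real.sqrt (z^2+ρ^2) := Real.sqrt_pos.2 (by positivity)
  rw [abs_of_pos (div_pos hρ' hu), ← ENNReal.ofReal_mul (by positivity),
    ← ENNReal.ofReal_mul (by positivity)]
  congr 1
  have h2 : Real.sqrt (z^2+ρ^2) ^ 3 = Real.sqrt (z^2+ρ^2) * (z^2+ρ^2) := by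
    rw [pow_succ, Real.sq_sqrt (by positivity), mul_comm]
  rw [h2]
  field_simp
  exact Real.sq_sqrt (by positivity)

lemma my_exp_int (β : ℝ) (hβ : 0 < β) :
    ∫ u in Ioi (0:ℝ), Real.exp (-β*u) = 1/β := by
  have h : ∀ u : ℝ, Real.exp (-β*u) = Real.exp (-(β*u)) := fun u => by rw [neg_mul]
  simp_rw [h]
  rw [integral_comp_mul_left_Ioi (fun x => Real.exp (-x)) 0 hβ, mul_zero,
    integral_exp_neg_Ioi, neg_zero, Real.exp_zero, smul_eq_mul, mul_one, one_div]

lemma my_triangle (β : ℝ) (hβ : 0 < β) :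
    ∫⁻ z in Ioi (0:ℝ), ∫⁻ u in Ioi z, ENNReal.ofReal (z * Real.exp (-β*u) / u^2)
      = ENNReal.ofReal (1/(2*β)) := by
  set T : Set (ℝ × ℝ) := {p : ℝ × ℝ | p.1 < p.2} with hT
  have hTmeas : MeasurableSet T := measurableSet_lt measurable_fst measurable_snd
  set F : ℝ × ℝ → ℝ≥0∞ := T.indicator (fun p => ENNReal.ofReal (p.1 * Real.exp (-β*p.2) / p.2^2))
    with hF
  have hFmeas : Measurable F := by
    apply Measurable.indicator _ hTmeas
    fun_prop
  have h1 : ∀ z : ℝ, ∫⁻ u in Ioi z, ENNReal.ofReal (z * Real.exp (-β*u) / u^2)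
      = ∫⁻ u, F (z, u) := by
    intro z
    rw [← lintegral_indicator measurableSet_Ioi]
    refine lintegral_congr fun u => ?_
    by_cases h : z < u <;> simp [hF, Set.indicator_apply, hT, h, mem_Ioi]
  simp_rw [h1]
  rw [lintegral_lintegral_swap (f := fun z u => F (z,u))
    (by exact hFmeas.aemeasurable)]
  have h2 : ∀ u : ℝ, ∫⁻ z in Ioi (0:ℝ), F (z, u)
      = (Ioi (0:ℝ)).indicator (fun u => ENNReal.ofReal (Real.exp (-β*u)/2)) u := by
    intro u
    by_cases hu : 0 < u
    · have e1 : ∀ z : ℝ, F (z,u)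
          = (Iio u).indicator (fun z => ENNReal.ofReal (z * Real.exp (-β*u) / u^2)) z := by
        intro z
        by_cases h : z < u <;> simp [hF, hT, Set.indicator_apply, h, mem_Iio]
      simp_rw [e1]
      rw [lintegral_indicator measurableSet_Iio, Measure.restrict_restrict measurableSet_Iio]
      have hIoo : Iio u ∩ Ioi 0 = Ioo 0 u := by
        ext x; simp [mem_Ioo, mem_Iio, mem_Ioi, and_comm]
      rw [hIoo]
      have e2 : ∀ z ∈ Ioo (0:ℝ) u, ENNReal.ofReal (z * Real.exp (-β*u)/u^2)
          = ENNReal.ofReal z * ENNReal.ofReal (Real.exp (-β*u)/u^2) := by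
        intro z hz
        rw [← ENNReal.ofReal_mul hz.1.le, mul_div_assoc]
      rw [setLIntegral_congr_fun_ae measurableSet_Ioo (ae_of_all _ e2),
        lintegral_mul_const' _ _ ENNReal.ofReal_ne_top]
      have e3 : ∫⁻ z in Ioo (0:ℝ) u, ENNReal.ofReal z = ENNReal.ofReal (u^2/2) := by
        rw [← ofReal_integral_eq_lintegral_ofReal]
        · rw [← integral_Ioc_eq_integral_Ioo, ← intervalIntegral.integral_of_le hu.le,
            integral_id]
          norm_num
        · exact (continuous_id.integrableOn_Icc).mono_set Ioo_subset_Icc_self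
        · filter_upwards [ae_restrict_mem measurableSet_Ioo] with z hz
          exact hz.1.le
      rw [e3, ← ENNReal.ofReal_mul (by positivity), Set.indicator_of_mem (mem_Ioi.2 hu)]
      congr 1
      field_simp
    · have e1 : ∀ z ∈ Ioi (0:ℝ), F (z,u) = 0 := by
        intro z hz
        apply Set.indicator_of_notMem
        simp only [hT, mem_setOf_eq, not_lt]
        exact le_trans (not_lt.1 hu) (le_of_lt hz)
      rw [setLIntegral_congr_fun_ae measurableSet_Ioi (ae_of_all _ e1), lintegral_zero,
        Set.indicator_of_notMem (by simpa using hu)]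
  simp_rw [h2]
  rw [lintegral_indicator measurableSet_Ioi, ← ofReal_integral_eq_lintegral_ofReal]
  · rw [integral_div, my_exp_int β hβ]
    congr 1
    field_simp
  · exact (exp_neg_integrableOn_Ioi 0 hβ).div_const 2
  · exact ae_of_all _ fun u => by positivity

noncomputable def myPsi : EuclideanSpace ℝ (Fin 3) ≃ᵐ ℝ × ℝ × ℝ :=
  (((MeasurableEquiv.toLp 2 (Fin 3 → ℝ)).symm).trans
    (MeasurableEquiv.piFinSuccAbove (fun _ : Fin 3 => ℝ) 0)).trans
    ((MeasurableEquiv.refl ℝ).prodCongr (MeasurableEquiv.finTwoArrow))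

lemma myPsi_mp : MeasurePreserving myPsi volume volume := by
  refine ((EuclideanSpace.volume_preserving_symm_measurableEquiv_toLp (Fin 3)).trans
    (volume_preserving_piFinSuccAbove (fun _ : Fin 3 => ℝ) 0)).trans ?_
  exact (MeasurePreserving.id volume).prod (volume_preserving_finTwoArrow ℝ)

lemma myPsi_symm_zero (q : ℝ × ℝ × ℝ) : (myPsi.symm q) 0 = q.1 := rfl

lemma myPsi_symm_one (q : ℝ × ℝ × ℝ) : (myPsi.symm q) 1 = q.2.1 := rfl

lemma myPsi_symm_two (q : ℝ × ℝ × ℝ) : (myPsi.symm q) 2 = q.2.2 := rfl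

lemma myPsi_symm_norm (q : ℝ × ℝ × ℝ) :
    ‖myPsi.symm q‖ = Real.sqrt (q.1^2 + q.2.1^2 + q.2.2^2) := by
  rw [EuclideanSpace.norm_eq, Fin.sum_univ_three,
    myPsi_symm_zero, myPsi_symm_one, myPsi_symm_two]
  simp [sq_abs]

lemma my_key (β : ℝ) (hβ : 0 < β) :
    ∫⁻ q : ℝ × ℝ × ℝ in Ioi (0:ℝ) ×ˢ (univ : Set (ℝ × ℝ)),
      ENNReal.ofReal (Real.exp (-β * Real.sqrt (q.1^2 + q.2.1^2 + q.2.2^2)) * q.1 /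
        Real.sqrt (q.1^2 + q.2.1^2 + q.2.2^2) ^ 3) = ENNReal.ofReal (π / β) := by
  have hmeas : Measurable (fun q : ℝ × ℝ × ℝ =>
      ENNReal.ofReal (Real.exp (-β * Real.sqrt (q.1^2 + q.2.1^2 + q.2.2^2)) * q.1 /
        Real.sqrt (q.1^2 + q.2.1^2 + q.2.2^2) ^ 3)) := by fun_prop
  rw [Measure.volume_eq_prod, ← Measure.restrict_prod_eq_prod_univ,
    lintegral_prod _ hmeas.aemeasurable]
  have h1 : ∀ z ∈ Ioi (0:ℝ), (∫⁻ w : ℝ × ℝ,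
      ENNReal.ofReal (Real.exp (-β * Real.sqrt (z^2 + w.1^2 + w.2^2)) * z /
        Real.sqrt (z^2 + w.1^2 + w.2^2) ^ 3))
      = ENNReal.ofReal (2*π) * ∫⁻ u in Ioi z, ENNReal.ofReal (z * Real.exp (-β*u) / u^2) := by
    intro z hz
    have hz' : (0:ℝ) < z := hz
    set g : ℝ → ℝ≥0∞ := fun s => ENNReal.ofReal
      (Real.exp (-β * Real.sqrt (z^2+s^2)) * z / Real.sqrt (z^2+s^2)^3) with hg
    have hgmeas : Measurable g := by fun_prop
    have e1 : ∀ w : ℝ × ℝ,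
        ENNReal.ofReal (Real.exp (-β * Real.sqrt (z^2 + w.1^2 + w.2^2)) * z /
          Real.sqrt (z^2 + w.1^2 + w.2^2) ^ 3) = g (Real.sqrt (w.1^2 + w.2^2)) := by
      intro w
      rw [hg]
      have harg : z^2 + (Real.sqrt (w.1^2+w.2^2))^2 = z^2 + w.1^2 + w.2^2 := by
        rw [Real.sq_sqrt (by positivity)]; ring
      simp only [harg]
    simp_rw [e1]
    rw [my_radial g hgmeas, hg]
    rw [my_subst β z hz']
  rw [setLIntegral_congr_fun_ae measurableSet_Ioi (ae_of_all _ h1),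
    lintegral_const_mul' _ _ ENNReal.ofReal_ne_top, my_triangle β hβ,
    ← ENNReal.ofReal_mul (by positivity)]
  congr 1
  field_simp

lemma my_coord_meas : Measurable (fun y : EuclideanSpace ℝ (Fin 3) => y 0) :=
  ((MeasurableEquiv.toLp 2 (Fin 3 → ℝ)).symm).measurable.eval

lemma my_euclid (β : ℝ) (hβ : 0 < β) :
    ∫⁻ x in {y : EuclideanSpace ℝ (Fin 3) | 0 < y 0},
      ENNReal.ofReal (Real.exp (-β * ‖x‖) * x 0 / ‖x‖^3) = ENNReal.ofReal (π/β) := by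
  have hS : MeasurableSet {y : EuclideanSpace ℝ (Fin 3) | 0 < y 0} :=
    measurableSet_lt measurable_const my_coord_meas
  rw [← my_setLIntegral_comp myPsi_mp.symm myPsi.symm.measurableEmbedding
    (fun x => ENNReal.ofReal (Real.exp (-β * ‖x‖) * x 0 / ‖x‖^3)) hS]
  have hpre : (⇑myPsi.symm) ⁻¹' {y : EuclideanSpace ℝ (Fin 3) | 0 < y 0}
      = Ioi (0:ℝ) ×ˢ (univ : Set (ℝ × ℝ)) := by
    ext q
    simp [myPsi_symm_zero, mem_Ioi]
  rw [hpre, ← my_key β hβ]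
  refine setLIntegral_congr_fun_ae (measurableSet_Ioi.prod MeasurableSet.univ)
    (ae_of_all _ fun q hq => ?_)
  rw [myPsi_symm_zero, myPsi_symm_norm]

/-- Inequality (10) of the paper's Lemma 2: for a unit vector `n`, `β > 0`, and any measurable
set `V` contained in the open half-space `{r : (r - p)·n > 0}`, the integral of
`exp(-β‖r - p‖) ((r - p)·n)/‖r - p‖³` over `V` is at most `π/β`. -/
theorem stmt_6 (p n : EuclideanSpace ℝ (Fin 3)) (hn : ‖n‖ = 1) (β : ℝ) (hβ : 0 < β)
    (V : Set (EuclideanSpace ℝ (Fin 3))) (hVmeas : MeasurableSet V)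
    (hV : V ⊆ {r : EuclideanSpace ℝ (Fin 3) | 0 < ⟪r - p, n⟫}) :
    ∫ r in V, Real.exp (-β * ‖r - p‖) * ⟪r - p, n⟫ / ‖r - p‖ ^ 3 ≤ π / β := by
  classical
  -- orthonormal basis with b 0 = n
  have horth : Orthonormal ℝ (({0} : Set (Fin 3)).restrict (fun _ : Fin 3 => n)) := by
    constructor
    · intro i
      simpa [Set.restrict] using hn
    · intro i j hij
      exact absurd (Subtype.ext (by
        have hi := i.2; have hj := j.2
        simp only [Set.mem_singleton_iff] at hi hj
        rw [hi, hj])) hij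
  obtain ⟨b, hb⟩ := horth.exists_orthonormalBasis_extension_of_card_eq
    (by simp [finrank_euclideanSpace_fin])
  have hb0 : b 0 = n := hb 0 rfl
  set f : EuclideanSpace ℝ (Fin 3) → ℝ :=
    fun r => Real.exp (-β * ‖r - p‖) * ⟪r - p, n⟫ / ‖r - p‖ ^ 3 with hf
  have hinnercont : Continuous fun r : EuclideanSpace ℝ (Fin 3) => ⟪r - p, n⟫ :=
    (continuous_id.sub continuous_const).inner continuous_const
  have hfmeas : Measurable f := by
    apply Measurable.div
    · exact (((continuous_const.mul
        ((continuous_id.sub continuous_const).norm)).rexp).mul hinnercont).measurable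
    · exact (((continuous_id.sub continuous_const).norm).pow 3).measurable
  have hH : MeasurableSet {r : EuclideanSpace ℝ (Fin 3) | 0 < ⟪r - p, n⟫} :=
    measurableSet_lt measurable_const hinnercont.measurable
  -- step 1: to lintegral
  rw [integral_eq_lintegral_of_nonneg_ae ?nn ?sm]
  case nn =>
    filter_upwards [ae_restrict_mem hVmeas] with r hr
    exact div_nonneg (mul_nonneg (Real.exp_nonneg _) (le_of_lt (hV hr))) (by positivity)
  case sm => exact hfmeas.aestronglyMeasurable
  -- step 2: compute the half-space lintegral
  have hcomp : ∫⁻ r in {r : EuclideanSpace ℝ (Fin 3) | 0 < ⟪r - p, n⟫},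
      ENNReal.ofReal (f r) = ENNReal.ofReal (π/β) := by
    -- translation
    rw [← my_setLIntegral_comp (measurePreserving_add_right volume p)
      (MeasurableEquiv.addRight p).measurableEmbedding (fun r => ENNReal.ofReal (f r)) hH]
    have hpre1 : (fun x => x + p) ⁻¹' {r : EuclideanSpace ℝ (Fin 3) | 0 < ⟪r - p, n⟫}
        = {x : EuclideanSpace ℝ (Fin 3) | 0 < ⟪x, n⟫} := by
      ext x; simp [add_sub_cancel_right]
    have he1 : ∀ x : EuclideanSpace ℝ (Fin 3),
        ENNReal.ofReal (f (x + p)) = ENNReal.ofReal (Real.exp (-β * ‖x‖) * ⟪x, n⟫ / ‖x‖ ^ 3) := by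
      intro x; rw [hf]; simp [add_sub_cancel_right]
    simp only [he1]
    rw [hpre1]
    -- rotation
    have hH2 : MeasurableSet {x : EuclideanSpace ℝ (Fin 3) | 0 < ⟪x, n⟫} :=
      measurableSet_lt measurable_const (continuous_id.inner continuous_const).measurable
    rw [← my_setLIntegral_comp b.measurePreserving_repr_symm
      (b.repr.symm.toHomeomorph.measurableEmbedding)
      (fun x => ENNReal.ofReal (Real.exp (-β * ‖x‖) * ⟪x, n⟫ / ‖x‖ ^ 3)) hH2]
    have hinner : ∀ y : EuclideanSpace ℝ (Fin 3), ⟪b.repr.symm y, n⟫ = y 0 := by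
      intro y
      rw [real_inner_comm, ← hb0, ← b.repr_apply_apply]
      simp
    have hpre2 : (⇑b.repr.symm) ⁻¹' {x : EuclideanSpace ℝ (Fin 3) | 0 < ⟪x, n⟫}
        = {y : EuclideanSpace ℝ (Fin 3) | 0 < y 0} := by
      ext y; simp only [Set.mem_preimage, Set.mem_setOf_eq, hinner y]
    have he2 : ∀ y : EuclideanSpace ℝ (Fin 3),
        ENNReal.ofReal (Real.exp (-β * ‖b.repr.symm y‖) * ⟪b.repr.symm y, n⟫ / ‖b.repr.symm y‖ ^ 3)
          = ENNReal.ofReal (Real.exp (-β * ‖y‖) * y 0 / ‖y‖ ^ 3) := by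
      intro y; rw [hinner y, b.repr.symm.norm_map]
    simp only [he2]
    rw [hpre2, my_euclid β hβ]
  -- step 3: monotonicity and conclusion
  have hmono : ∫⁻ r in V, ENNReal.ofReal (f r) ∂volume
      ≤ ENNReal.ofReal (π/β) := by
    rw [← hcomp]
    exact lintegral_mono_set hV
  calc (∫⁻ r in V, ENNReal.ofReal (f r)).toReal
      ≤ (ENNReal.ofReal (π/β)).toReal := ENNReal.toReal_mono ENNReal.ofReal_ne_top hmono
    _ = π / β := ENNReal.toReal_ofReal (by positivity)
end

section
/- Fix p ∈ ℝ³ and n ∈ ℝ³, and define the vector field v : ℝ³ ∖ {p} → ℝ³ by v(r) = (((p − r) · n) / ‖r − p‖⁴) · (r − p). Then v is differentiable on ℝ³ ∖ {p} and its divergence vanishes there: for every r ≠ p, the trace of the Fréchet derivative of v at r is zero. -/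
open scoped RealInnerProductSpace

local notation "E" => EuclideanSpace ℝ (Fin 3)

lemma trace_smulRight' (φ : E →ₗ[ℝ] ℝ) (w : E) :
    LinearMap.trace ℝ E (φ.smulRight w) = φ w := by
  have h : φ.smulRight w = dualTensorHom ℝ E E (φ ⊗ₜ w) := by
    ext x; simp
  rw [h, LinearMap.trace_eq_contract_apply, contractLeft_apply]

lemma trace_key (c : ℝ) (ψ : E →L[ℝ] ℝ) (w : E) :
    LinearMap.trace ℝ E
      ((c • ContinuousLinearMap.id ℝ E + ψ.smulRight w : E →L[ℝ] E) : E →ₗ[ℝ] E)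
      = c * 3 + ψ w := by
  rw [ContinuousLinearMap.coe_add, map_add]
  have h1 : ((ψ.smulRight w : E →L[ℝ] E) : E →ₗ[ℝ] E) = (ψ : E →ₗ[ℝ] ℝ).smulRight w := rfl
  have h2 : ((c • ContinuousLinearMap.id ℝ E : E →L[ℝ] E) : E →ₗ[ℝ] E)
      = c • LinearMap.id := by ext x; simp
  rw [h1, trace_smulRight', h2, map_smul, LinearMap.trace_id, finrank_euclideanSpace_fin]
  norm_num [smul_eq_mul]

/-- Divergence computation from the proof of the paper's Lemma 1: the vector field
`v(r) = (((p - r)·n)/‖r - p‖⁴) (r - p)` is differentiable away from `p` and divergence-free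
there (the trace of its Fréchet derivative vanishes). -/
theorem stmt_10 (p n : EuclideanSpace ℝ (Fin 3)) :
    ∀ r : EuclideanSpace ℝ (Fin 3), r ≠ p →
      DifferentiableAt ℝ
        (fun s : EuclideanSpace ℝ (Fin 3) => (⟪p - s, n⟫ / ‖s - p‖ ^ 4) • (s - p)) r ∧
      LinearMap.trace ℝ (EuclideanSpace ℝ (Fin 3))
        (fderiv ℝ (fun s : EuclideanSpace ℝ (Fin 3) =>
          (⟪p - s, n⟫ / ‖s - p‖ ^ 4) • (s - p)) r : EuclideanSpace ℝ (Fin 3) →ₗ[ℝ]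
            EuclideanSpace ℝ (Fin 3)) = 0 := by
  intro r hr
  have hu : r - p ≠ 0 := sub_ne_zero.mpr hr
  have hn : ‖r - p‖ ≠ 0 := norm_ne_zero_iff.mpr hu
  have hBne : ‖r - p‖ ^ 4 ≠ 0 := pow_ne_zero 4 hn
  have hQ := (((hasFDerivAt_id r).sub_const p).inner ℝ ((hasFDerivAt_id r).sub_const p))
  have hB := hQ.mul hQ
  simp only [id_eq] at hB hQ
  have heq : (fun s : E => ‖s - p‖ ^ 4) = fun s : E => ⟪s - p, s - p⟫ * ⟪s - p, s - p⟫ := by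
    funext s
    rw [real_inner_self_eq_norm_sq]; ring
  simp only [Pi.mul_def] at hB
  rw [← heq] at hB
  have hBinv := (hasDerivAt_inv hBne).comp_hasFDerivAt r hB
  have hA := (((hasFDerivAt_id r).const_sub p).inner ℝ (hasFDerivAt_const n r))
  simp only [id_eq] at hA
  have hF := hA.mul hBinv
  have hv := hF.smul ((hasFDerivAt_id r).sub_const p)
  simp only [div_eq_mul_inv, Function.comp_def]
  simp only [Function.comp_def, id_eq] at hv
  simp only [Pi.mul_def, Pi.smul_def'] at hv
  refine ⟨hv.differentiableAt, ?_⟩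
  rw [hv.fderiv, trace_key]
  simp only [ContinuousLinearMap.add_apply, ContinuousLinearMap.smul_apply,
    ContinuousLinearMap.coe_comp', Function.comp_apply, ContinuousLinearMap.prod_apply,
    fderivInnerCLM_apply, ContinuousLinearMap.coe_id', id_eq,
    ContinuousLinearMap.neg_apply, ContinuousLinearMap.zero_apply,
    inner_zero_right, inner_zero_left, ContinuousLinearMap.neg_apply, smul_eq_mul]
  have h2 : ⟪r - p, r - p⟫ = ‖r - p‖ ^ 2 := real_inner_self_eq_norm_sq _
  have h3 : ⟪p - r, n⟫ = -⟪r - p, n⟫ := by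
    rw [← inner_neg_left]; congr 1; abel
  rw [h2, h3]
  simp only [inner_neg_left]
  field_simp
  ring
end
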